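/- Let T(λ) = -B_0 + λI + Σ_{i=1}^m B_i/(λ - α_i) with n×n complex matrices B_i and distinct α_i ∈ ℂ. If all B_i (1 ≤ i ≤ m) are invertible, then a complex number λ_0 different from all α_i is an eigenvalue of T(λ) if and only if λ_0 is an eigenvalue of the block matrix C_T = [[α_1 I, 0, ..., 0, -I], ..., [0, ..., α_m I, -I], [B_1, ..., B_m, B_0]]; consequently T has at most (m+1)n eigenvalues. -/

import Mathlib

open Matrix Polynomial

lemma sum_smul_mulVec {m n : ℕ} (c : Fin m → ℂ) (M : Fin m → Matrix (Fin n) (Fin n) ℂ)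
    (v : Fin n → ℂ) (r : Fin n) :
    ((∑ i, c i • M i).mulVec v) r = ∑ i, c i * (M i).mulVec v r := by
  simp only [Matrix.mulVec, dotProduct, Finset.sum_apply, Pi.smul_apply,
    smul_eq_mul, Finset.sum_mul, Finset.mul_sum, Matrix.sum_apply]
  rw [Finset.sum_comm]
  apply Finset.sum_congr rfl
  intro i _
  apply Finset.sum_congr rfl
  intro s _
  simp [Pi.smul_apply]; ring

lemma eig_isRoot_charpoly {ι : Type*} [Fintype ι] [DecidableEq ι]
    (M : Matrix ι ι ℂ) (μ : ℂ) (w : ι → ℂ) (hw : w ≠ 0)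
    (h : M.mulVec w = μ • w) : M.charpoly.IsRoot μ := by
  have hdet : (μ • (1 : Matrix ι ι ℂ) - M).det = 0 := by
    rw [← Matrix.exists_mulVec_eq_zero_iff]
    exact ⟨w, hw, by rw [Matrix.sub_mulVec, Matrix.smul_mulVec, Matrix.one_mulVec, h, sub_self]⟩
  have : M.charpoly.eval μ = (μ • (1 : Matrix ι ι ℂ) - M).det := by
    rw [Matrix.charpoly, ← Polynomial.coe_evalRingHom, RingHom.map_det]
    congr 1
    ext i j
    by_cases hij : i = j
    · subst hij; simp [Matrix.charmatrix_apply_eq, Matrix.one_apply]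
    · simp [Matrix.charmatrix_apply_ne _ _ _ hij, Matrix.one_apply, hij]
  rwa [Polynomial.IsRoot, this]

/-- The `(m+1)n × (m+1)n` block companion-type matrix
`C_T = [[α₁I, 0, …, 0, -I], …, [0, …, αₘI, -I], [B₁, …, Bₘ, B₀]]`. -/
def blockCT (m n : ℕ) (B0 : Matrix (Fin n) (Fin n) ℂ) (B : Fin m → Matrix (Fin n) (Fin n) ℂ)
    (α : Fin m → ℂ) :
    Matrix ((Fin m × Fin n) ⊕ Fin n) ((Fin m × Fin n) ⊕ Fin n) ℂ
  | Sum.inl (i, r), Sum.inl (j, s) => if i = j ∧ r = s then α i else 0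
  | Sum.inl (_, r), Sum.inr s => -(if r = s then 1 else 0)
  | Sum.inr r, Sum.inl (j, s) => B j r s
  | Sum.inr r, Sum.inr s => B0 r s

lemma blockCT_mulVec_inl (m n : ℕ) (B0 : Matrix (Fin n) (Fin n) ℂ)
    (B : Fin m → Matrix (Fin n) (Fin n) ℂ) (α : Fin m → ℂ)
    (w : (Fin m × Fin n) ⊕ Fin n → ℂ) (i : Fin m) (r : Fin n) :
    (blockCT m n B0 B α).mulVec w (Sum.inl (i, r)) =
      α i * w (Sum.inl (i, r)) - w (Sum.inr r) := by
  rw [Matrix.mulVec, dotProduct, Fintype.sum_sum_type]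
  have h1 : ∑ x : Fin m × Fin n, blockCT m n B0 B α (Sum.inl (i, r)) (Sum.inl x) * w (Sum.inl x)
      = α i * w (Sum.inl (i, r)) := by
    rw [Fintype.sum_prod_type]
    rw [Finset.sum_eq_single i]
    · rw [Finset.sum_eq_single r]
      · simp [blockCT]
      · intro s _ hs; simp [blockCT, hs, Ne.symm hs]
      · simp
    · intro j _ hj
      apply Finset.sum_eq_zero
      intro s _
      simp [blockCT, hj.symm]
    · simp
  have h2 : ∑ s : Fin n, blockCT m n B0 B α (Sum.inl (i, r)) (Sum.inr s) * w (Sum.inr s)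
      = -w (Sum.inr r) := by
    rw [Finset.sum_eq_single r]
    · simp [blockCT]
    · intro s _ hs; simp [blockCT, hs, Ne.symm hs]
    · simp
  rw [h1, h2]; ring


lemma blockCT_mulVec_inr (m n : ℕ) (B0 : Matrix (Fin n) (Fin n) ℂ)
    (B : Fin m → Matrix (Fin n) (Fin n) ℂ) (α : Fin m → ℂ)
    (w : (Fin m × Fin n) ⊕ Fin n → ℂ) (r : Fin n) :
    (blockCT m n B0 B α).mulVec w (Sum.inr r) =
      (∑ j, (B j).mulVec (fun s => w (Sum.inl (j, s))) r) + B0.mulVec (fun s => w (Sum.inr s)) r := by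
  rw [Matrix.mulVec, dotProduct, Fintype.sum_sum_type, Fintype.sum_prod_type]
  rfl




/-- If all coefficients `B₁, …, Bₘ` of
`T(λ) = -B₀ + λI + Σ Bᵢ/(λ - αᵢ)` are invertible, then a complex number `λ₀` different
from all poles `αᵢ` is an eigenvalue of `T` iff it is an eigenvalue of the block matrix
`C_T`; consequently `T` has at most `(m+1)n` eigenvalues. -/
theorem stmt_18 (m n : ℕ) (B0 : Matrix (Fin n) (Fin n) ℂ)
    (B : Fin m → Matrix (Fin n) (Fin n) ℂ) (hBinv : ∀ i, IsUnit (B i))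
    (α : Fin m → ℂ) (hα : Function.Injective α) :
    (∀ lam0 : ℂ, (∀ i, lam0 ≠ α i) →
      ((∃ v : Fin n → ℂ, v ≠ 0 ∧
          (-B0 + lam0 • (1 : Matrix (Fin n) (Fin n) ℂ) +
            ∑ i, (lam0 - α i)⁻¹ • B i).mulVec v = 0) ↔
        (∃ w : (Fin m × Fin n) ⊕ Fin n → ℂ, w ≠ 0 ∧
          (blockCT m n B0 B α).mulVec w = lam0 • w))) ∧
    {lam0 : ℂ | (∀ i, lam0 ≠ α i) ∧ ∃ v : Fin n → ℂ, v ≠ 0 ∧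
        (-B0 + lam0 • (1 : Matrix (Fin n) (Fin n) ℂ) +
          ∑ i, (lam0 - α i)⁻¹ • B i).mulVec v = 0}.Finite ∧
    {lam0 : ℂ | (∀ i, lam0 ≠ α i) ∧ ∃ v : Fin n → ℂ, v ≠ 0 ∧
        (-B0 + lam0 • (1 : Matrix (Fin n) (Fin n) ℂ) +
          ∑ i, (lam0 - α i)⁻¹ • B i).mulVec v = 0}.ncard ≤ (m + 1) * n := by
  have key : ∀ lam0 : ℂ, (∀ i, lam0 ≠ α i) →
      ((∃ v : Fin n → ℂ, v ≠ 0 ∧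
          (-B0 + lam0 • (1 : Matrix (Fin n) (Fin n) ℂ) +
            ∑ i, (lam0 - α i)⁻¹ • B i).mulVec v = 0) ↔
        (∃ w : (Fin m × Fin n) ⊕ Fin n → ℂ, w ≠ 0 ∧
          (blockCT m n B0 B α).mulVec w = lam0 • w)) := by
    intro lam0 hne
    have hsub : ∀ i, lam0 - α i ≠ 0 := fun i => sub_ne_zero.mpr (hne i)
    have hc : ∀ i, (lam0 - α i) * (lam0 - α i)⁻¹ = 1 := fun i => mul_inv_cancel₀ (hsub i)
    constructor
    · rintro ⟨v, hv, hTv⟩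
      have hT : ∀ r, -(B0.mulVec v r) + lam0 * v r
          + ∑ j, (lam0 - α j)⁻¹ * (B j).mulVec v r = 0 := by
        intro r
        have h0 := congrFun hTv r
        rw [Matrix.add_mulVec, Matrix.add_mulVec, Matrix.neg_mulVec,
          Matrix.smul_mulVec, Matrix.one_mulVec] at h0
        simpa [sum_smul_mulVec] using h0
      refine ⟨Sum.elim (fun p => -((lam0 - α p.1)⁻¹ * v p.2)) v, ?_, ?_⟩
      · intro h0
        apply hv
        ext r
        exact congrFun h0 (Sum.inr r)
      · ext x
        cases x with
        | inl p =>
          obtain ⟨i, r⟩ := p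
          rw [blockCT_mulVec_inl]
          simp only [Sum.elim_inl, Sum.elim_inr, Pi.smul_apply, smul_eq_mul]
          linear_combination v r * hc i
        | inr r =>
          rw [blockCT_mulVec_inr]
          simp only [Sum.elim_inl, Sum.elim_inr, Pi.smul_apply, smul_eq_mul]
          have hmv : ∀ j : Fin m, (B j).mulVec (fun s => -((lam0 - α j)⁻¹ * v s)) r
              = -((lam0 - α j)⁻¹ * (B j).mulVec v r) := by
            intro j
            have hfun : (fun s => -((lam0 - α j)⁻¹ * v s)) = (-(lam0 - α j)⁻¹) • v := by
              ext s; rw [Pi.smul_apply, smul_eq_mul]; ring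
            rw [hfun, Matrix.mulVec_smul, Pi.smul_apply, smul_eq_mul]; ring
          simp only [hmv]
          rw [Finset.sum_neg_distrib]
          linear_combination -(hT r)
    · rintro ⟨w, hw, heig⟩
      set u : Fin n → ℂ := fun r => w (Sum.inr r) with hu
      have hinl : ∀ (i : Fin m) (r : Fin n),
          w (Sum.inl (i, r)) = -((lam0 - α i)⁻¹ * u r) := by
        intro i r
        have h1 := congrFun heig (Sum.inl (i, r))
        rw [blockCT_mulVec_inl] at h1
        simp only [Pi.smul_apply, smul_eq_mul] at h1
        have h3 : (lam0 - α i) * w (Sum.inl (i, r)) = -u r := by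
          simp only [hu]; linear_combination -h1
        calc w (Sum.inl (i, r))
            = (lam0 - α i)⁻¹ * ((lam0 - α i) * w (Sum.inl (i, r))) := by
              rw [← mul_assoc, inv_mul_cancel₀ (hsub i), one_mul]
          _ = -((lam0 - α i)⁻¹ * u r) := by rw [h3]; ring
      have hune : u ≠ 0 := by
        intro h0
        apply hw
        ext x
        cases x with
        | inl p =>
          obtain ⟨i, r⟩ := p
          rw [hinl i r, congrFun h0 r]
          simp
        | inr r => exact congrFun h0 r
      refine ⟨u, hune, ?_⟩
      ext r
      have h2 := congrFun heig (Sum.inr r)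
      rw [blockCT_mulVec_inr] at h2
      simp only [Pi.smul_apply, smul_eq_mul] at h2
      have hmv : ∀ j : Fin m, (B j).mulVec (fun s => w (Sum.inl (j, s))) r
          = -((lam0 - α j)⁻¹ * (B j).mulVec u r) := by
        intro j
        have hfun : (fun s => w (Sum.inl (j, s))) = (-(lam0 - α j)⁻¹) • u := by
          ext s; rw [hinl j s, Pi.smul_apply, smul_eq_mul]; ring
        rw [hfun, Matrix.mulVec_smul, Pi.smul_apply, smul_eq_mul]; ring
      simp only [hmv] at h2
      rw [Matrix.add_mulVec, Matrix.add_mulVec, Matrix.neg_mulVec]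
      simp only [Pi.add_apply, Pi.neg_apply, Matrix.smul_mulVec, Matrix.one_mulVec,
        Pi.smul_apply, smul_eq_mul, Pi.zero_apply, sum_smul_mulVec]
      have h4 : (B0.mulVec (fun s => w (Sum.inr s))) r = B0.mulVec u r := rfl
      have h5 : lam0 * w (Sum.inr r) = lam0 * u r := rfl
      rw [h4, h5, Finset.sum_neg_distrib] at h2
      linear_combination -h2
  refine ⟨key, ?_, ?_⟩
  all_goals {
    have hsubset : {lam0 : ℂ | (∀ i, lam0 ≠ α i) ∧ ∃ v : Fin n → ℂ, v ≠ 0 ∧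
        (-B0 + lam0 • (1 : Matrix (Fin n) (Fin n) ℂ) +
          ∑ i, (lam0 - α i)⁻¹ • B i).mulVec v = 0} ⊆
        ↑(blockCT m n B0 B α).charpoly.roots.toFinset := by
      rintro lam0 ⟨hne, hv⟩
      obtain ⟨w, hw, heig⟩ := (key lam0 hne).mp hv
      have hroot := eig_isRoot_charpoly _ lam0 w hw heig
      have hne0 : (blockCT m n B0 B α).charpoly ≠ 0 :=
        (Matrix.charpoly_monic _).ne_zero
      simp only [Finset.coe_sort_coe, Multiset.mem_toFinset, Finset.mem_coe]
      rw [Polynomial.mem_roots hne0]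
      exact hroot
    first
    | exact Set.Finite.subset (Finset.finite_toSet _) hsubset
    | { refine le_trans (Set.ncard_le_ncard hsubset (Finset.finite_toSet _)) ?_
        rw [Set.ncard_coe_finset]
        calc (blockCT m n B0 B α).charpoly.roots.toFinset.card
            ≤ Multiset.card (blockCT m n B0 B α).charpoly.roots :=
              Multiset.toFinset_card_le _
          _ ≤ (blockCT m n B0 B α).charpoly.natDegree := Polynomial.card_roots' _
          _ = (m + 1) * n := by
              rw [Matrix.charpoly_natDegree_eq_dim]
              simp only [Fintype.card_sum, Fintype.card_prod, Fintype.card_fin]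
              ring }
  }
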